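/- Define h_n(s) := (1 - F_{0,n}(s)) · Π_{k=1}^{n-1} F_{k,n}(s), where F_{i,n} are compositions of geometric generating functions F_i(s) = 1/(1+e^{X_i}(1-s)). Then h_n(s) = [1/(a_n(1-s)^{-1} + b_n)] · [a_n(1-s)^{-1} / (a_n(1-s)^{-1} + b_n - b_1)], where a_n = e^{-S_n}, b_j = Σ_{k=0}^{j-1} e^{-S_k}, S_k = X_1 + ⋯ + X_k, S_0 = 0. -/

import Mathlib

/-- The geometric offspring generating function with mean `e^x`. -/
noncomputable def geomF (x s : ℝ) : ℝ := 1 / (1 + Real.exp x * (1 - s))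

/-- `compF X n i s = F_{i+1}(F_{i+2}(⋯ F_n(s) ⋯))`. -/
noncomputable def compF (X : ℕ → ℝ) (n : ℕ) : ℕ → ℝ → ℝ := fun i s =>
  if _h : i < n then geomF (X (i + 1)) (compF X n (i + 1) s) else s
termination_by i => n - i
decreasing_by omega

/-- The associated random walk `S_k = X_1 + ⋯ + X_k`, `S_0 = 0`. -/
noncomputable def walkS (X : ℕ → ℝ) (k : ℕ) : ℝ := ∑ j ∈ Finset.range k, X (j + 1)

/-- `b_j = ∑_{k=0}^{j-1} e^{-S_k}`. -/
noncomputable def coefb (X : ℕ → ℝ) (j : ℕ) : ℝ :=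
  ∑ k ∈ Finset.range j, Real.exp (-(walkS X k))

lemma coefb_succ (X : ℕ → ℝ) (j : ℕ) :
    coefb X (j + 1) = coefb X j + Real.exp (-(walkS X j)) :=
  Finset.sum_range_succ _ _

lemma walkS_succ (X : ℕ → ℝ) (j : ℕ) :
    walkS X (j + 1) = walkS X j + X (j + 1) :=
  Finset.sum_range_succ _ _

lemma coefb_mono (X : ℕ → ℝ) {i n : ℕ} (h : i ≤ n) : coefb X i ≤ coefb X n := by
  apply Finset.sum_le_sum_of_subset_of_nonneg
  · exact Finset.range_mono h
  · intro k _ _; positivity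

/-- Telescoping product of ratios. -/
lemma prod_ratio (f : ℕ → ℝ) (n : ℕ) (hn : 1 ≤ n)
    (hf : ∀ k, 1 ≤ k → k ≤ n → f k ≠ 0) :
    ∏ k ∈ Finset.Ico 1 n, f (k + 1) / f k = f n / f 1 := by
  induction n, hn using Nat.le_induction with
  | base => simp [div_self (hf 1 le_rfl le_rfl)]
  | succ n hn ih =>
    rw [Finset.prod_Ico_succ_top hn, ih (fun k h1 h2 => hf k h1 (h2.trans n.le_succ))]
    have h1 : f 1 ≠ 0 := hf 1 le_rfl (by omega)
    have h2 : f n ≠ 0 := hf n hn (by omega)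
    field_simp

/-- The explicit fractional-linear form of `compF`. -/
lemma compF_formula (X : ℕ → ℝ) (n : ℕ) (s : ℝ) (hs0 : 0 ≤ s) (hs1 : s < 1) :
    ∀ i, i ≤ n → compF X n i s =
      (Real.exp (-(walkS X n)) * (1 - s)⁻¹ + coefb X n - coefb X (i + 1)) /
      (Real.exp (-(walkS X n)) * (1 - s)⁻¹ + coefb X n - coefb X i) := by
  set A : ℝ := Real.exp (-(walkS X n)) * (1 - s)⁻¹ with hA
  have hs : (0 : ℝ) < 1 - s := by linarith
  have hApos : 0 < A := by positivity
  have hD : ∀ i, i ≤ n → 0 < A + coefb X n - coefb X i := by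
    intro i hi
    have := coefb_mono X hi
    linarith
  suffices h : ∀ m i, i ≤ n → n - i = m →
      compF X n i s = (A + coefb X n - coefb X (i + 1)) / (A + coefb X n - coefb X i) by
    intro i hi; exact h (n - i) i hi rfl
  intro m
  induction m with
  | zero =>
    intro i hi hm
    have hin : i = n := by omega
    rw [hin, compF]
    simp only [lt_irrefl, dif_neg, not_false_iff]
    rw [coefb_succ]
    have hne : (1 - s) ≠ 0 := ne_of_gt hs
    have hnum : A + coefb X n - (coefb X n + Real.exp (-(walkS X n)))
        = s * (A + coefb X n - coefb X n) := by
      rw [hA]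
      field_simp
      ring
    rw [hnum]
    have hX : A + coefb X n - coefb X n ≠ 0 := by
      rw [add_sub_cancel_right]; exact ne_of_gt hApos
    rw [mul_div_cancel_right₀ s hX]
  | succ m ih =>
    intro i hi hm
    have hilt : i < n := by omega
    rw [compF]
    simp only [hilt, dif_pos]
    rw [ih (i + 1) (by omega) (by omega)]
    rw [geomF]
    have hD1 : 0 < A + coefb X n - coefb X (i + 1) := hD (i + 1) (by omega)
    have hD0 : 0 < A + coefb X n - coefb X i := hD i (by omega)
    have h1 : 1 - (A + coefb X n - coefb X (i + 1 + 1)) / (A + coefb X n - coefb X (i + 1))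
        = Real.exp (-(walkS X (i + 1))) / (A + coefb X n - coefb X (i + 1)) := by
      rw [coefb_succ X (i + 1)]
      field_simp
      ring
    rw [h1]
    have h2 : Real.exp (X (i + 1)) * (Real.exp (-(walkS X (i + 1))) /
        (A + coefb X n - coefb X (i + 1)))
        = Real.exp (-(walkS X i)) / (A + coefb X n - coefb X (i + 1)) := by
      rw [walkS_succ, ← mul_div_assoc, ← Real.exp_add]
      ring_nf
    rw [h2]
    have h3 : 1 + Real.exp (-(walkS X i)) / (A + coefb X n - coefb X (i + 1))
        = (A + coefb X n - coefb X i) / (A + coefb X n - coefb X (i + 1)) := by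
      have : coefb X (i + 1) = coefb X i + Real.exp (-(walkS X i)) := coefb_succ X i
      field_simp
      linarith [this]
    rw [h3]
    rw [one_div_div]

/-- `h_n(s) = (1 - F_{0,n}(s)) ∏_{k=1}^{n-1} F_{k,n}(s)
  = [a_n(1-s)^{-1} + b_n]⁻¹ · a_n(1-s)^{-1} / (a_n(1-s)^{-1} + b_n - b_1)`. -/
theorem h_n_formula (X : ℕ → ℝ) (n : ℕ) (hn : 1 ≤ n) (s : ℝ)
    (hs : s ∈ Set.Ico (0 : ℝ) 1) :
    (1 - compF X n 0 s) * ∏ k ∈ Finset.Ico 1 n, compF X n k s =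
      (1 / (Real.exp (-(walkS X n)) * (1 - s)⁻¹ + coefb X n)) *
      (Real.exp (-(walkS X n)) * (1 - s)⁻¹ /
        (Real.exp (-(walkS X n)) * (1 - s)⁻¹ + coefb X n - coefb X 1)) := by
  obtain ⟨hs0, hs1⟩ := hs
  set A : ℝ := Real.exp (-(walkS X n)) * (1 - s)⁻¹ with hA
  have hsgt : (0 : ℝ) < 1 - s := by linarith
  have hApos : 0 < A := by positivity
  set D : ℕ → ℝ := fun k => A + coefb X n - coefb X k with hDdef
  have hD : ∀ i, i ≤ n → 0 < D i := by
    intro i hi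
    have := coefb_mono X hi
    simp only [hDdef]
    linarith
  have hform := compF_formula X n s hs0 hs1
  have hprod : ∏ k ∈ Finset.Ico 1 n, compF X n k s = D n / D 1 := by
    rw [Finset.prod_congr rfl (fun k hk => ?_)]
    · exact prod_ratio D n hn (fun k h1 h2 => ne_of_gt (hD k h2))
    · simp only [Finset.mem_Ico] at hk
      exact hform k (by omega)
  have hD0 : 0 < D 0 := hD 0 (by omega)
  have hD1 : 0 < D 1 := hD 1 hn
  have hb0 : coefb X 0 = 0 := by simp [coefb]
  have hb1 : coefb X 1 = 1 := by simp [coefb, walkS]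
  have hDn : D n = A := by simp [hDdef]
  have hD0' : D 0 = A + coefb X n := by simp [hDdef, hb0]
  have hD1' : D 1 = A + coefb X n - 1 := by simp [hDdef, hb1]
  have h1 : A + coefb X n ≠ 0 := by rw [← hD0']; exact ne_of_gt hD0
  rw [hprod, hform 0 (by omega), hDn]
  rw [← hA]
  simp only [zero_add, hb0, hb1, sub_zero]
  rw [← hD1', ← hD0']
  have key : 1 - D 1 / D 0 = 1 / D 0 := by
    rw [hD0', hD1', one_sub_div h1]
    congr 1
    ring
  rw [key]
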